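/- Let f = y·(x + y − 4z)·(x − y + 4z)·(x² + y² − 16z²) ∈ ℂ[x,y,z] (a smooth conic circumscribed about a triangle, i.e. a triangle inscribed in the conic), let J_f = ⟨∂f/∂x, ∂f/∂y, ∂f/∂z⟩ be its Jacobian ideal, and let m = ⟨x, y, z⟩. Then the colon ideal (J_f : m) equals J_f; that is, J_f is saturated with respect to m, i.e. the curve f = 0 is a free plane curve. -/

import Mathlib

open MvPolynomial

namespace ConicFreeProof


noncomputable abbrev S3 := MvPolynomial (Fin 3) ℂ

@[simp] lemma pd00 : pderiv (0:Fin 3) (X 0 : S3) = 1 := pderiv_X_self 0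
@[simp] lemma pd11 : pderiv (1:Fin 3) (X 1 : S3) = 1 := pderiv_X_self 1
@[simp] lemma pd22 : pderiv (2:Fin 3) (X 2 : S3) = 1 := pderiv_X_self 2
@[simp] lemma pd01 : pderiv (0:Fin 3) (X 1 : S3) = 0 := pderiv_X_of_ne (by decide)
@[simp] lemma pd02 : pderiv (0:Fin 3) (X 2 : S3) = 0 := pderiv_X_of_ne (by decide)
@[simp] lemma pd10 : pderiv (1:Fin 3) (X 0 : S3) = 0 := pderiv_X_of_ne (by decide)
@[simp] lemma pd12 : pderiv (1:Fin 3) (X 2 : S3) = 0 := pderiv_X_of_ne (by decide)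
@[simp] lemma pd20 : pderiv (2:Fin 3) (X 0 : S3) = 0 := pderiv_X_of_ne (by decide)
@[simp] lemma pd21 : pderiv (2:Fin 3) (X 1 : S3) = 0 := pderiv_X_of_ne (by decide)

lemma mem_span_triple {R : Type*} [CommRing R] {a b c u : R} :
    u ∈ Ideal.span ({a, b, c} : Set R) ↔ ∃ p q r, u = p*a + q*b + r*c := by
  constructor
  · intro h
    rw [show ({a, b, c} : Set R) = insert a {b, c} from rfl, Ideal.mem_span_insert] at h
    obtain ⟨p, w, hw, rfl⟩ := h
    rw [show ({b, c} : Set R) = insert b {c} from rfl, Ideal.mem_span_insert] at hw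
    obtain ⟨q, w2, hw2, rfl⟩ := hw
    rw [Ideal.mem_span_singleton'] at hw2
    obtain ⟨r, rfl⟩ := hw2
    exact ⟨p, q, r, by ring⟩
  · rintro ⟨p, q, r, rfl⟩
    refine Ideal.add_mem _ (Ideal.add_mem _ ?_ ?_) ?_ <;>
      exact Ideal.mul_mem_left _ _ (Ideal.subset_span (by simp))

lemma primeX (i : Fin 3) : Prime (X i : S3) := by
  have h0 : Prime (X 0 : S3) := by
    rw [← MulEquiv.prime_iff (finSuccEquiv ℂ 2).toMulEquiv]
    have : ((finSuccEquiv ℂ 2).toMulEquiv (X 0 : S3)) = Polynomial.X := by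
      simp [finSuccEquiv_X_zero]
    rw [this]
    exact Polynomial.prime_X
  have := (MulEquiv.prime_iff (renameEquiv ℂ (Equiv.swap (0:Fin 3) i)).toMulEquiv
      (p := (X 0 : S3))).mpr h0
  simpa using this

lemma ndvdX {i j : Fin 3} (h : i ≠ j) : ¬ (X i : S3) ∣ X j := fun hd => h (X_dvd_X.mp hd)

lemma nzC5 : (5*(X 0*X 1 + 2*X 0*X 2 - 2*X 1*X 2) : S3) ≠ 0 := by
  intro h
  have h2 := congrArg (eval ![1,1,0]) h
  simp at h2

lemma nzS2 : (2*X 1 - 3*X 0 : S3) ≠ 0 := by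
  intro h
  have h2 := congrArg (eval ![0,1,0]) h
  simp at h2


lemma koszul {a b c : S3} (h : X 2 * a = X 1 * b + X 0 * c) :
    ∃ u v, a = X 0 * u + X 1 * v := by
  classical
  have ha : a ∈ Ideal.span ({X 0, X 1} : Set S3) := by
    have himg : (MvPolynomial.X '' ({0, 1} : Set (Fin 3)) : Set S3) = {X 0, X 1} := by
      simp [Set.image_insert_eq]
    rw [← himg, mem_ideal_span_X_image]
    intro mo hmo
    by_contra hcon
    push_neg at hcon
    have h0 : mo 0 = 0 := hcon 0 (by simp)
    have h1 : mo 1 = 0 := hcon 1 (by simp)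
    have key : coeff (Finsupp.single 2 1 + mo) (X 2 * a) = coeff mo a :=
      coeff_X_mul mo 2 a
    rw [h, coeff_add, coeff_X_mul', coeff_X_mul'] at key
    rw [if_neg, if_neg] at key
    · exact (mem_support_iff.mp hmo) (by rw [← key]; ring)
    · rw [Finsupp.mem_support_iff]
      simp [h0]
    · rw [Finsupp.mem_support_iff]
      simp [h1]
  rw [Ideal.mem_span_pair] at ha
  obtain ⟨u, v, huv⟩ := ha
  exact ⟨u, v, by linear_combination -huv⟩


noncomputable def A0 : S3 := 2*X 0*X 1 + 2*X 0*X 2 - X 1*X 2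
noncomputable def B0 : S3 := 2*X 0*X 1 + X 0*X 2 - 2*X 1*X 2
noncomputable def C0 : S3 := X 0*X 1 + 2*X 0*X 2 - 2*X 1*X 2
noncomputable def G1 : S3 := X 1*X 2*A0
noncomputable def G2 : S3 := X 0*X 2*B0
noncomputable def G3 : S3 := X 0*X 1*C0


lemma ABC_syz {α β γ : S3} (h : α*A0 + β*B0 + γ*C0 = 0) :
    ∃ t1 t2 : S3, 5*α = t1*(2*X 2 - 3*X 0) + t2*(2*X 1 - 3*X 0) ∧
      5*β = t1*(2*X 0 + 2*X 2) + t2*(2*X 0 - 3*X 1) ∧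
      5*γ = t1*(2*X 0 - 3*X 2) + t2*(2*X 0 + 2*X 1) := by
  simp only [A0, B0, C0] at h
  -- divisibility of w1 by z
  have hd1 : (X 2 : S3) ∣ (2*α + 2*β + γ) := by
    have hdvd : (X 2 : S3) ∣ (2*α + 2*β + γ) * (X 0 * X 1) :=
      ⟨-((2*α + β + 2*γ)*X 0) - (-α - 2*β - 2*γ)*X 1, by linear_combination h⟩
    rcases (primeX 2).dvd_mul.mp hdvd with h' | h'
    · exact h'
    · rcases (primeX 2).dvd_mul.mp h' with h'' | h''
      · exact absurd h'' (ndvdX (by decide))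
      · exact absurd h'' (ndvdX (by decide))
  have hd2 : (X 1 : S3) ∣ (2*α + β + 2*γ) := by
    have hdvd : (X 1 : S3) ∣ (2*α + β + 2*γ) * (X 0 * X 2) :=
      ⟨-((2*α + 2*β + γ)*X 0) - (-α - 2*β - 2*γ)*X 2, by linear_combination h⟩
    rcases (primeX 1).dvd_mul.mp hdvd with h' | h'
    · exact h'
    · rcases (primeX 1).dvd_mul.mp h' with h'' | h''
      · exact absurd h'' (ndvdX (by decide))
      · exact absurd h'' (ndvdX (by decide))
  obtain ⟨t1, ht1⟩ := hd1
  obtain ⟨t2, ht2⟩ := hd2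
  have h3 : (-α - 2*β - 2*γ : S3) = -(X 0)*(t1 + t2) := by
    have hc : (X 1 * X 2 : S3) * ((-α - 2*β - 2*γ) + X 0*(t1 + t2)) = X 1 * X 2 * 0 := by
      linear_combination h - X 0*X 1*ht1 - X 0*X 2*ht2
    have := mul_left_cancel₀ (mul_ne_zero (X_ne_zero 1) (X_ne_zero 2)) hc
    linear_combination this
  exact ⟨t1, t2, by linear_combination 2*ht1 + 2*ht2 + 3*h3,
    by linear_combination 2*ht1 - 3*ht2 - 2*h3,
    by linear_combination -3*ht1 + 2*ht2 - 2*h3⟩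

lemma G_syz {p1 p2 p3 : S3} (h : p1*G1 + p2*G2 + p3*G3 = 0) :
    ∃ t1 t2 : S3,
      5*p1 = X 0*(t1*(2*X 2 - 3*X 0) + t2*(2*X 1 - 3*X 0)) ∧
      5*p2 = X 1*(t1*(2*X 0 + 2*X 2) + t2*(2*X 0 - 3*X 1)) ∧
      5*p3 = X 2*(t1*(2*X 0 - 3*X 2) + t2*(2*X 0 + 2*X 1)) := by
  simp only [G1, G2, G3, A0, B0, C0] at h
  have hnd : ∀ i j : Fin 3, i ≠ j → ¬ (X i : S3) ∣ X j := fun i j hij => ndvdX hij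
  -- X 0 ∣ p1
  have hd1 : (X 0 : S3) ∣ p1 := by
    have hdvd : (X 0 : S3) ∣ p1 * (X 1 * (X 2 * (2*X 0*X 1 + 2*X 0*X 2 - X 1*X 2))) :=
      ⟨-(p2 * (X 2*(2*X 0*X 1 + X 0*X 2 - 2*X 1*X 2))) -
        p3 * (X 1*(X 0*X 1 + 2*X 0*X 2 - 2*X 1*X 2)), by linear_combination h⟩
    rcases (primeX 0).dvd_mul.mp hdvd with h' | h'
    · exact h'
    rcases (primeX 0).dvd_mul.mp h' with h' | h'
    · exact absurd h' (hnd _ _ (by decide))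
    rcases (primeX 0).dvd_mul.mp h' with h' | h'
    · exact absurd h' (hnd _ _ (by decide))
    -- X 0 ∣ A0
    have : (X 0 : S3) ∣ X 1 * X 2 := by
      obtain ⟨w, hw⟩ := h'
      exact ⟨2*X 1 + 2*X 2 - w, by linear_combination -hw⟩
    rcases (primeX 0).dvd_mul.mp this with h'' | h''
    · exact absurd h'' (hnd _ _ (by decide))
    · exact absurd h'' (hnd _ _ (by decide))
  have hd2 : (X 1 : S3) ∣ p2 := by
    have hdvd : (X 1 : S3) ∣ p2 * (X 0 * (X 2 * (2*X 0*X 1 + X 0*X 2 - 2*X 1*X 2))) :=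
      ⟨-(p1 * (X 2*(2*X 0*X 1 + 2*X 0*X 2 - X 1*X 2))) -
        p3 * (X 0*(X 0*X 1 + 2*X 0*X 2 - 2*X 1*X 2)), by linear_combination h⟩
    rcases (primeX 1).dvd_mul.mp hdvd with h' | h'
    · exact h'
    rcases (primeX 1).dvd_mul.mp h' with h' | h'
    · exact absurd h' (hnd _ _ (by decide))
    rcases (primeX 1).dvd_mul.mp h' with h' | h'
    · exact absurd h' (hnd _ _ (by decide))
    have : (X 1 : S3) ∣ X 0 * X 2 := by
      obtain ⟨w, hw⟩ := h'
      exact ⟨w - 2*X 0 + 2*X 2, by linear_combination hw⟩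
    rcases (primeX 1).dvd_mul.mp this with h'' | h''
    · exact absurd h'' (hnd _ _ (by decide))
    · exact absurd h'' (hnd _ _ (by decide))
  have hd3 : (X 2 : S3) ∣ p3 := by
    have hdvd : (X 2 : S3) ∣ p3 * (X 0 * (X 1 * (X 0*X 1 + 2*X 0*X 2 - 2*X 1*X 2))) :=
      ⟨-(p1 * (X 1*(2*X 0*X 1 + 2*X 0*X 2 - X 1*X 2))) -
        p2 * (X 0*(2*X 0*X 1 + X 0*X 2 - 2*X 1*X 2)), by linear_combination h⟩
    rcases (primeX 2).dvd_mul.mp hdvd with h' | h'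
    · exact h'
    rcases (primeX 2).dvd_mul.mp h' with h' | h'
    · exact absurd h' (hnd _ _ (by decide))
    rcases (primeX 2).dvd_mul.mp h' with h' | h'
    · exact absurd h' (hnd _ _ (by decide))
    have : (X 2 : S3) ∣ X 0 * X 1 := by
      obtain ⟨w, hw⟩ := h'
      exact ⟨w - 2*X 0 + 2*X 1, by linear_combination hw⟩
    rcases (primeX 2).dvd_mul.mp this with h'' | h''
    · exact absurd h'' (hnd _ _ (by decide))
    · exact absurd h'' (hnd _ _ (by decide))
  obtain ⟨q1, hq1⟩ := hd1
  obtain ⟨q2, hq2⟩ := hd2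
  obtain ⟨q3, hq3⟩ := hd3
  have hcan : (X 0*X 1*X 2 : S3) * (q1*A0 + q2*B0 + q3*C0) = X 0*X 1*X 2 * 0 := by
    simp only [A0, B0, C0]
    linear_combination h - (X 1*X 2*(2*X 0*X 1 + 2*X 0*X 2 - X 1*X 2))*hq1
      - (X 0*X 2*(2*X 0*X 1 + X 0*X 2 - 2*X 1*X 2))*hq2
      - (X 0*X 1*(X 0*X 1 + 2*X 0*X 2 - 2*X 1*X 2))*hq3
  have hABC : q1*A0 + q2*B0 + q3*C0 = 0 :=
    mul_left_cancel₀ (mul_ne_zero (mul_ne_zero (X_ne_zero 0) (X_ne_zero 1)) (X_ne_zero 2)) hcan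
  obtain ⟨t1, t2, e1, e2, e3⟩ := ABC_syz hABC
  exact ⟨t1, t2, by linear_combination 5*hq1 + X 0*e1,
    by linear_combination 5*hq2 + X 1*e2,
    by linear_combination 5*hq3 + X 2*e3⟩


noncomputable def J0 : Ideal S3 := Ideal.span {G1, G2, G3}
lemma indep {s1 s2 : S3}
    (e1 : s1*(2*X 2 - 3*X 0) + s2*(2*X 1 - 3*X 0) = 0)
    (e2 : s1*(2*X 0 + 2*X 2) + s2*(2*X 0 - 3*X 1) = 0) :
    s1 = 0 ∧ s2 = 0 := by
  have h1 : s1 * (5*(X 0*X 1 + 2*X 0*X 2 - 2*X 1*X 2)) = 0 := by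
    linear_combination (2*X 0 - 3*X 1)*e1 - (2*X 1 - 3*X 0)*e2
  have h2 : s2 * (5*(X 0*X 1 + 2*X 0*X 2 - 2*X 1*X 2)) = 0 := by
    linear_combination (2*X 2 - 3*X 0)*e2 - (2*X 0 + 2*X 2)*e1
  exact ⟨(mul_eq_zero.mp h1).resolve_right nzC5, (mul_eq_zero.mp h2).resolve_right nzC5⟩

lemma core {g : S3} (h0 : g * X 0 ∈ J0) (h1 : g * X 1 ∈ J0) (h2 : g * X 2 ∈ J0) :
    g ∈ J0 := by
  rw [J0, mem_span_triple] at h0 h1 h2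
  obtain ⟨P1, P2, P3, hP⟩ := h0
  obtain ⟨Q1, Q2, Q3, hQ⟩ := h1
  obtain ⟨R1, R2, R3, hR⟩ := h2
  have sPQ : (X 1*P1 - X 0*Q1)*G1 + (X 1*P2 - X 0*Q2)*G2 + (X 1*P3 - X 0*Q3)*G3 = 0 := by
    linear_combination X 0*hQ - X 1*hP
  have sPR : (X 2*P1 - X 0*R1)*G1 + (X 2*P2 - X 0*R2)*G2 + (X 2*P3 - X 0*R3)*G3 = 0 := by
    linear_combination X 0*hR - X 2*hP
  have sQR : (X 2*Q1 - X 1*R1)*G1 + (X 2*Q2 - X 1*R2)*G2 + (X 2*Q3 - X 1*R3)*G3 = 0 := by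
    linear_combination X 1*hR - X 2*hQ
  obtain ⟨a1, a2, ha1, ha2, ha3⟩ := G_syz sPQ
  obtain ⟨b1, b2, hb1, hb2, hb3⟩ := G_syz sPR
  obtain ⟨c1, c2, hc1, hc2, hc3⟩ := G_syz sQR
  have e1 : (X 2*a1 - X 1*b1 + X 0*c1)*(2*X 2 - 3*X 0)
      + (X 2*a2 - X 1*b2 + X 0*c2)*(2*X 1 - 3*X 0) = 0 := by
    have hc : (X 0:S3) * ((X 2*a1 - X 1*b1 + X 0*c1)*(2*X 2 - 3*X 0)
        + (X 2*a2 - X 1*b2 + X 0*c2)*(2*X 1 - 3*X 0)) = X 0 * 0 := by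
      linear_combination X 1*hb1 - X 2*ha1 - X 0*hc1
    exact mul_left_cancel₀ (X_ne_zero 0) hc
  have e2 : (X 2*a1 - X 1*b1 + X 0*c1)*(2*X 0 + 2*X 2)
      + (X 2*a2 - X 1*b2 + X 0*c2)*(2*X 0 - 3*X 1) = 0 := by
    have hc : (X 1:S3) * ((X 2*a1 - X 1*b1 + X 0*c1)*(2*X 0 + 2*X 2)
        + (X 2*a2 - X 1*b2 + X 0*c2)*(2*X 0 - 3*X 1)) = X 1 * 0 := by
      linear_combination X 1*hb2 - X 2*ha2 - X 0*hc2
    exact mul_left_cancel₀ (X_ne_zero 1) hc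
  obtain ⟨hs1, hs2⟩ := indep e1 e2
  obtain ⟨u1, w1, hok1⟩ := koszul (a := a1) (b := b1) (c := -c1) (by linear_combination hs1)
  obtain ⟨u2, w2, hok2⟩ := koszul (a := a2) (b := b2) (c := -c2) (by linear_combination hs2)
  have k1 : (X 0:S3) ∣ X 1 * (5*P1 - X 0*(w1*(2*X 2 - 3*X 0) + w2*(2*X 1 - 3*X 0))) :=
    ⟨5*Q1 + X 0*(u1*(2*X 2 - 3*X 0) + u2*(2*X 1 - 3*X 0)),
      by linear_combination ha1 + X 0*(2*X 2 - 3*X 0)*hok1 + X 0*(2*X 1 - 3*X 0)*hok2⟩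
  have k2 : (X 0:S3) ∣ X 1 * (5*P2 - X 1*(w1*(2*X 0 + 2*X 2) + w2*(2*X 0 - 3*X 1))) :=
    ⟨5*Q2 + X 1*(u1*(2*X 0 + 2*X 2) + u2*(2*X 0 - 3*X 1)),
      by linear_combination ha2 + X 1*(2*X 0 + 2*X 2)*hok1 + X 1*(2*X 0 - 3*X 1)*hok2⟩
  have k3 : (X 0:S3) ∣ X 1 * (5*P3 - X 2*(w1*(2*X 0 - 3*X 2) + w2*(2*X 0 + 2*X 1))) :=
    ⟨5*Q3 + X 2*(u1*(2*X 0 - 3*X 2) + u2*(2*X 0 + 2*X 1)),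
      by linear_combination ha3 + X 2*(2*X 0 - 3*X 2)*hok1 + X 2*(2*X 0 + 2*X 1)*hok2⟩
  have nd01 : ¬ (X 0:S3) ∣ X 1 := ndvdX (by decide)
  obtain ⟨T1, hT1⟩ := ((primeX 0).dvd_mul.mp k1).resolve_left nd01
  obtain ⟨T2, hT2⟩ := ((primeX 0).dvd_mul.mp k2).resolve_left nd01
  obtain ⟨T3, hT3⟩ := ((primeX 0).dvd_mul.mp k3).resolve_left nd01
  have h5x : (X 0:S3) * (5*g) = X 0 * (T1*G1 + T2*G2 + T3*G3) := by
    simp only [G1, G2, G3, A0, B0, C0] at hP ⊢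
    linear_combination (norm := ring_nf)
      5*hP + (X 1*X 2*(2*X 0*X 1 + 2*X 0*X 2 - X 1*X 2))*hT1
      + (X 0*X 2*(2*X 0*X 1 + X 0*X 2 - 2*X 1*X 2))*hT2
      + (X 0*X 1*(X 0*X 1 + 2*X 0*X 2 - 2*X 1*X 2))*hT3
  have h5g : (5:S3)*g = T1*G1 + T2*G2 + T3*G3 := mul_left_cancel₀ (X_ne_zero 0) h5x
  have h5C : (5:S3)*C (1/5:ℂ) = 1 := by
    rw [show ((5:S3)) = C (5:ℂ) from (map_ofNat _ _).symm, ← C_mul]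
    norm_num
  rw [J0, mem_span_triple]
  exact ⟨C (1/5:ℂ)*T1, C (1/5:ℂ)*T2, C (1/5:ℂ)*T3,
    by linear_combination C (1/5:ℂ)*h5g - g*h5C⟩

noncomputable def φ : S3 →ₐ[ℂ] S3 :=
  aeval ![X 0 + X 1 - 4*X 2, X 0 - X 1 + 4*X 2, X 1]
noncomputable def ψ : S3 →ₐ[ℂ] S3 :=
  aeval ![4*C ((8:ℂ)⁻¹)*(X 0 + X 1), X 2, C ((8:ℂ)⁻¹)*(X 1 - X 0 + 2*X 2)]

lemma h8C : (8:S3)*C ((8:ℂ)⁻¹) = 1 := by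
  rw [show ((8:S3)) = C (8:ℂ) from (map_ofNat _ _).symm, ← C_mul]
  norm_num

lemma psi_phi (p : S3) : ψ (φ p) = p := by
  have h : (ψ.comp φ) = AlgHom.id ℂ S3 := by
    apply MvPolynomial.algHom_ext
    intro i
    fin_cases i
    · simp [φ, ψ, map_ofNat]
      linear_combination (X 0 - X 2) * h8C
    · simp [φ, ψ, map_ofNat]
      linear_combination (X 1 + X 2) * h8C
    · simp [φ, ψ, map_ofNat]
  have := congrArg (fun (F : S3 →ₐ[ℂ] S3) => F p) h
  simpa using this

lemma phi_psi (p : S3) : φ (ψ p) = p := by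
  have h : (φ.comp ψ) = AlgHom.id ℂ S3 := by
    apply MvPolynomial.algHom_ext
    intro i
    fin_cases i
    · simp [φ, ψ, map_ofNat]
      linear_combination X 0 * h8C
    · simp [φ, ψ, map_ofNat]
    · simp [φ, ψ, map_ofNat]
      linear_combination X 2 * h8C
  have := congrArg (fun (F : S3 →ₐ[ℂ] S3) => F p) h
  simpa using this

theorem main
    (f : MvPolynomial (Fin 3) ℂ)
    (hf : f = X 1 * (X 0 + X 1 - 4 * X 2) * (X 0 - X 1 + 4 * X 2) *
        (X 0 ^ 2 + X 1 ^ 2 - 16 * X 2 ^ 2))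
    (Jf : Ideal (MvPolynomial (Fin 3) ℂ))
    (hJf : Jf = Ideal.span {pderiv 0 f, pderiv 1 f, pderiv 2 f})
    (m : Ideal (MvPolynomial (Fin 3) ℂ))
    (hm : m = Ideal.span {X 0, X 1, X 2}) :
    Submodule.colon Jf m = Jf := by
  -- derivative identities
  have hp0 : pderiv 0 f = φ G1 + φ G2 := by
    rw [hf, show ((4:S3)) = C (4:ℂ) from (map_ofNat _ _).symm,
      show ((16:S3)) = C (16:ℂ) from (map_ofNat _ _).symm]
    simp only [pderiv_mul, map_add, map_sub, pderiv_pow, pderiv_C,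
      pd00, pd01, pd02, pd10, pd11, pd12, pd20, pd21, pd22]
    simp [φ, G1, G2, A0, B0, map_ofNat]
    ring
  have hp1 : pderiv 1 f = φ G1 - φ G2 + φ G3 := by
    rw [hf, show ((4:S3)) = C (4:ℂ) from (map_ofNat _ _).symm,
      show ((16:S3)) = C (16:ℂ) from (map_ofNat _ _).symm]
    simp only [pderiv_mul, map_add, map_sub, pderiv_pow, pderiv_C,
      pd00, pd01, pd02, pd10, pd11, pd12, pd20, pd21, pd22]
    simp [φ, G1, G2, G3, A0, B0, C0, map_ofNat]
    ring
  have hp2 : pderiv 2 f = -4*φ G1 + 4*φ G2 := by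
    rw [hf, show ((4:S3)) = C (4:ℂ) from (map_ofNat _ _).symm,
      show ((16:S3)) = C (16:ℂ) from (map_ofNat _ _).symm]
    simp only [pderiv_mul, map_add, map_sub, pderiv_pow, pderiv_C,
      pd00, pd01, pd02, pd10, pd11, pd12, pd20, pd21, pd22]
    simp [φ, G1, G2, A0, B0, map_ofNat]
    ring
  -- Jf is spanned by the transformed generators
  have hspan : Jf = Ideal.span {φ G1, φ G2, φ G3} := by
    rw [hJf]
    apply le_antisymm
    · rw [Ideal.span_le]
      rintro q hq
      simp only [Set.mem_insert_iff, Set.mem_singleton_iff] at hq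
      rcases hq with rfl | rfl | rfl
      · exact mem_span_triple.mpr ⟨1, 1, 0, by linear_combination hp0⟩
      · exact mem_span_triple.mpr ⟨1, -1, 1, by linear_combination hp1⟩
      · exact mem_span_triple.mpr ⟨-4, 4, 0, by linear_combination hp2⟩
    · rw [Ideal.span_le]
      rintro q hq
      simp only [Set.mem_insert_iff, Set.mem_singleton_iff] at hq
      rcases hq with rfl | rfl | rfl
      · exact mem_span_triple.mpr ⟨4*C ((8:ℂ)⁻¹), 0, -C ((8:ℂ)⁻¹),
          by linear_combination (-(4*C ((8:ℂ)⁻¹)))*hp0 + C ((8:ℂ)⁻¹)*hp2 + (-(φ G1))*h8C⟩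
      · exact mem_span_triple.mpr ⟨4*C ((8:ℂ)⁻¹), 0, C ((8:ℂ)⁻¹),
          by linear_combination (-(4*C ((8:ℂ)⁻¹)))*hp0 + (-(C ((8:ℂ)⁻¹)))*hp2 + (-(φ G2))*h8C⟩
      · exact mem_span_triple.mpr ⟨0, 1, 2*C ((8:ℂ)⁻¹),
          by linear_combination (-1)*hp1 + (-(2*C ((8:ℂ)⁻¹)))*hp2 + (φ G1 - φ G2)*h8C⟩
  -- the two inclusions
  apply le_antisymm
  · intro g hg
    have key : ∀ w : S3, w ∈ m → g * w ∈ Ideal.span {φ G1, φ G2, φ G3} := by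
      intro w hw
      have := Submodule.mem_colon.mp hg w hw
      rwa [smul_eq_mul, hspan] at this
    have hmem : ∀ i : Fin 3, φ (X i) ∈ m := by
      intro i
      rw [hm]
      fin_cases i
      · exact mem_span_triple.mpr ⟨1, 1, -4, by simp [φ]; ring⟩
      · exact mem_span_triple.mpr ⟨1, -1, 4, by simp [φ]; ring⟩
      · exact mem_span_triple.mpr ⟨0, 1, 0, by simp [φ]⟩
    have hXmem : ∀ i : Fin 3, (ψ g) * X i ∈ J0 := by
      intro i
      obtain ⟨p1, p2, p3, hp⟩ := mem_span_triple.mp (key (φ (X i)) (hmem i))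
      have hψ := congrArg ψ hp
      simp only [map_mul, map_add, psi_phi] at hψ
      rw [J0, mem_span_triple]
      exact ⟨ψ p1, ψ p2, ψ p3, hψ⟩
    have hcore : ψ g ∈ J0 := core (hXmem 0) (hXmem 1) (hXmem 2)
    rw [J0, mem_span_triple] at hcore
    obtain ⟨q1, q2, q3, hq⟩ := hcore
    have hφ := congrArg φ hq
    simp only [map_mul, map_add, phi_psi] at hφ
    rw [hspan, mem_span_triple]
    exact ⟨φ q1, φ q2, φ q3, hφ⟩
  · intro q hq
    rw [Submodule.mem_colon]
    intro p hp
    rw [smul_eq_mul]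
    exact Ideal.mul_mem_right p _ hq


end ConicFreeProof

/-- The conic-line arrangement `y(x + y - 4z)(x - y + 4z)(x² + y² - 16z²) = 0`
(a triangle inscribed in a smooth conic) is a free plane curve: its Jacobian ideal
is saturated with respect to the irrelevant ideal `⟨x, y, z⟩`, i.e. `(J_f : m) = J_f`. -/
theorem conic_circumscribed_about_triangle_is_free
    (f : MvPolynomial (Fin 3) ℂ)
    (hf : f = X 1 * (X 0 + X 1 - 4 * X 2) * (X 0 - X 1 + 4 * X 2) *
        (X 0 ^ 2 + X 1 ^ 2 - 16 * X 2 ^ 2))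
    (Jf : Ideal (MvPolynomial (Fin 3) ℂ))
    (hJf : Jf = Ideal.span {pderiv 0 f, pderiv 1 f, pderiv 2 f})
    (m : Ideal (MvPolynomial (Fin 3) ℂ))
    (hm : m = Ideal.span {X 0, X 1, X 2}) :
    Submodule.colon Jf m = Jf :=
  ConicFreeProof.main f hf Jf hJf m hm
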